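/- Let X be a Banach space and T_1, T_2 : X \times X \to X operators satisfying \|T_1(u_1,u_2) - T_1(v_1,v_2)\| \le k_1\|u_1-v_1\| + k_2\|u_2-v_2\| and \|T_2(u_1,u_2) - T_2(v_1,v_2)\| \le k_3\|u_1-v_1\| + k_4\|u_2-v_2\|, with nonnegative constants k_i. If the matrix H = [[k_1,k_2],[k_3,k_4]] has powers converging to zero (equivalently spectral radius less than one), then the system u_1 = T_1(u_1,u_2), u_2 = T_2(u_1,u_2) is Ulam--Hyers stable: there exist constants C_1,C_2,C_3,C_4 > 0 such that for every \varepsilon_1,\varepsilon_2 > 0 and every (u_1^*,u_2^*) with \|u_1^* - T_1(u_1^*,u_2^*)\| \le \varepsilon_1 and \|u_2^* - T_2(u_1^*,u_2^*)\| \le \varepsilon_2, there exists a solution (v_1^*,v_2^*) of the system with \|u_1^*-v_1^*\| \le C_1\varepsilon_1 + C_2\varepsilon_2 and \|u_2^*-v_2^*\| \le C_3\varepsilon_1 + C_4\varepsilon_2. -/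

import Mathlib

open Filter

set_option maxHeartbeats 1000000 in
theorem urs_ulam_hyers_stability
    {X : Type*} [NormedAddCommGroup X] [NormedSpace ℝ X] [CompleteSpace X]
    (T₁ T₂ : X × X → X) (k₁ k₂ k₃ k₄ : ℝ)
    (hk₁ : 0 ≤ k₁) (hk₂ : 0 ≤ k₂) (hk₃ : 0 ≤ k₃) (hk₄ : 0 ≤ k₄)
    (hT₁ : ∀ u₁ u₂ v₁ v₂ : X,
        ‖T₁ (u₁, u₂) - T₁ (v₁, v₂)‖ ≤ k₁ * ‖u₁ - v₁‖ + k₂ * ‖u₂ - v₂‖)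
    (hT₂ : ∀ u₁ u₂ v₁ v₂ : X,
        ‖T₂ (u₁, u₂) - T₂ (v₁, v₂)‖ ≤ k₃ * ‖u₁ - v₁‖ + k₄ * ‖u₂ - v₂‖)
    (H : Matrix (Fin 2) (Fin 2) ℝ)
    (hH : H = !![k₁, k₂; k₃, k₄])
    (hconv : Tendsto (fun n : ℕ => H ^ n) atTop (nhds 0)) :
    ∃ C₁ C₂ C₃ C₄ : ℝ, 0 < C₁ ∧ 0 < C₂ ∧ 0 < C₃ ∧ 0 < C₄ ∧
      ∀ ε₁ ε₂ : ℝ, 0 < ε₁ → 0 < ε₂ →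
        ∀ u₁ u₂ : X, ‖u₁ - T₁ (u₁, u₂)‖ ≤ ε₁ → ‖u₂ - T₂ (u₁, u₂)‖ ≤ ε₂ →
          ∃ v₁ v₂ : X, v₁ = T₁ (v₁, v₂) ∧ v₂ = T₂ (v₁, v₂) ∧
            ‖u₁ - v₁‖ ≤ C₁ * ε₁ + C₂ * ε₂ ∧ ‖u₂ - v₂‖ ≤ C₃ * ε₁ + C₄ * ε₂ := by
  have h00 : H 0 0 = k₁ := by simp [hH]
  have h01 : H 0 1 = k₂ := by simp [hH]
  have h10 : H 1 0 = k₃ := by simp [hH]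
  have h11 : H 1 1 = k₄ := by simp [hH]
  have hent1 : ∀ i j, 0 ≤ H i j := by
    intro i j; rw [hH]; fin_cases i <;> fin_cases j <;> simpa
  have hmul : ∀ (n : ℕ) (i j : Fin 2),
      (H ^ (n + 1)) i j = H i 0 * (H ^ n) 0 j + H i 1 * (H ^ n) 1 j := by
    intro n i j
    rw [pow_succ', Matrix.mul_apply, Fin.sum_univ_two]
  have hent : ∀ (n : ℕ) (i j : Fin 2), 0 ≤ (H ^ n) i j := by
    intro n
    induction n with
    | zero =>
      intro i j
      simp only [pow_zero, Matrix.one_apply]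
      split_ifs <;> norm_num
    | succ n ih =>
      intro i j
      rw [hmul]
      exact add_nonneg (mul_nonneg (hent1 _ _) (ih _ _)) (mul_nonneg (hent1 _ _) (ih _ _))
  set f : X × X → X × X := fun p => (T₁ p, T₂ p) with hfdef
  have key : ∀ (n : ℕ) (p q : X × X),
      ‖(f^[n] p).1 - (f^[n] q).1‖ ≤
        (H ^ n) 0 0 * ‖p.1 - q.1‖ + (H ^ n) 0 1 * ‖p.2 - q.2‖ ∧
      ‖(f^[n] p).2 - (f^[n] q).2‖ ≤
        (H ^ n) 1 0 * ‖p.1 - q.1‖ + (H ^ n) 1 1 * ‖p.2 - q.2‖ := by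
    intro n
    induction n with
    | zero => intro p q; simp [Matrix.one_apply]
    | succ n ih =>
      intro p q
      rw [Function.iterate_succ_apply', Function.iterate_succ_apply']
      obtain ⟨ih1, ih2⟩ := ih p q
      constructor
      · calc ‖(f (f^[n] p)).1 - (f (f^[n] q)).1‖
            = ‖T₁ ((f^[n] p).1, (f^[n] p).2) - T₁ ((f^[n] q).1, (f^[n] q).2)‖ := by
              simp [hfdef]
          _ ≤ k₁ * ‖(f^[n] p).1 - (f^[n] q).1‖ + k₂ * ‖(f^[n] p).2 - (f^[n] q).2‖ :=
              hT₁ _ _ _ _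
          _ ≤ k₁ * ((H ^ n) 0 0 * ‖p.1 - q.1‖ + (H ^ n) 0 1 * ‖p.2 - q.2‖)
              + k₂ * ((H ^ n) 1 0 * ‖p.1 - q.1‖ + (H ^ n) 1 1 * ‖p.2 - q.2‖) := by
              gcongr
          _ = (H ^ (n + 1)) 0 0 * ‖p.1 - q.1‖ + (H ^ (n + 1)) 0 1 * ‖p.2 - q.2‖ := by
              rw [hmul, hmul, h00, h01]; ring
      · calc ‖(f (f^[n] p)).2 - (f (f^[n] q)).2‖
            = ‖T₂ ((f^[n] p).1, (f^[n] p).2) - T₂ ((f^[n] q).1, (f^[n] q).2)‖ := by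
              simp [hfdef]
          _ ≤ k₃ * ‖(f^[n] p).1 - (f^[n] q).1‖ + k₄ * ‖(f^[n] p).2 - (f^[n] q).2‖ :=
              hT₂ _ _ _ _
          _ ≤ k₃ * ((H ^ n) 0 0 * ‖p.1 - q.1‖ + (H ^ n) 0 1 * ‖p.2 - q.2‖)
              + k₄ * ((H ^ n) 1 0 * ‖p.1 - q.1‖ + (H ^ n) 1 1 * ‖p.2 - q.2‖) := by
              gcongr
          _ = (H ^ (n + 1)) 1 0 * ‖p.1 - q.1‖ + (H ^ (n + 1)) 1 1 * ‖p.2 - q.2‖ := by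
              rw [hmul, hmul, h10, h11]; ring
  -- entrywise convergence
  have hij : ∀ i j : Fin 2, Tendsto (fun n : ℕ => (H ^ n) i j) atTop (nhds 0) := by
    intro i j
    have hc : Continuous fun M : Matrix (Fin 2) (Fin 2) ℝ => M i j :=
      continuous_id.matrix_elem i j
    have := (hc.tendsto 0).comp hconv
    simpa [Function.comp_def] using this
  have hev : ∀ᶠ n : ℕ in atTop, (H ^ n) 0 0 < 1/4 ∧ (H ^ n) 0 1 < 1/4 ∧
      (H ^ n) 1 0 < 1/4 ∧ (H ^ n) 1 1 < 1/4 := by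
    have h4 : (0 : ℝ) < 1/4 := by norm_num
    exact ((hij 0 0).eventually_lt_const h4).and
      (((hij 0 1).eventually_lt_const h4).and
        (((hij 1 0).eventually_lt_const h4).and ((hij 1 1).eventually_lt_const h4)))
  obtain ⟨m, hm00, hm01, hm10, hm11⟩ :
      ∃ m : ℕ, (H ^ m) 0 0 < 1/4 ∧ (H ^ m) 0 1 < 1/4 ∧
        (H ^ m) 1 0 < 1/4 ∧ (H ^ m) 1 1 < 1/4 := by
    obtain ⟨m, hm⟩ := hev.exists
    exact ⟨m, hm.1, hm.2.1, hm.2.2.1, hm.2.2.2⟩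
  -- f^[m] is a 1/2-contraction for the sup norm on X × X
  have hlip : LipschitzWith (1/2 : NNReal) (f^[m]) := by
    apply LipschitzWith.of_dist_le_mul
    intro p q
    obtain ⟨h1, h2⟩ := key m p q
    have e1 : ‖p.1 - q.1‖ ≤ dist p q := by
      rw [← dist_eq_norm, Prod.dist_eq]; exact le_max_left _ _
    have e2 : ‖p.2 - q.2‖ ≤ dist p q := by
      rw [← dist_eq_norm, Prod.dist_eq]; exact le_max_right _ _
    have hd : (0 : ℝ) ≤ dist p q := dist_nonneg
    rw [Prod.dist_eq]
    have c1 : dist (f^[m] p).1 (f^[m] q).1 ≤ (1/2 : ℝ) * dist p q := by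
      rw [dist_eq_norm]
      nlinarith [hent m 0 0, hent m 0 1, norm_nonneg (p.1 - q.1), norm_nonneg (p.2 - q.2)]
    have c2 : dist (f^[m] p).2 (f^[m] q).2 ≤ (1/2 : ℝ) * dist p q := by
      rw [dist_eq_norm]
      nlinarith [hent m 1 0, hent m 1 1, norm_nonneg (p.1 - q.1), norm_nonneg (p.2 - q.2)]
    have : ((1/2 : NNReal) : ℝ) = (1/2 : ℝ) := by norm_num
    rw [this]
    exact max_le c1 c2
  have hg : ContractingWith (1/2 : NNReal) (f^[m]) := ⟨by rw [← NNReal.coe_lt_coe]; norm_num, hlip⟩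
  set v : X × X := ContractingWith.fixedPoint (f^[m]) hg with hvdef
  have hfv : f v = v := ContractingWith.isFixedPt_fixedPoint_iterate hg
  -- constants
  set S : ℕ → ℝ := fun j => (H ^ j) 0 0 + (H ^ j) 0 1 + (H ^ j) 1 0 + (H ^ j) 1 1 with hSdef
  have hSnn : ∀ j, 0 ≤ S j := by
    intro j
    simp only [hSdef]
    linarith [hent j 0 0, hent j 0 1, hent j 1 0, hent j 1 1]
  set C : ℝ := 2 * (∑ j ∈ Finset.range m, S j) + 1 with hCdef
  have hCpos : 0 < C := by
    have : 0 ≤ ∑ j ∈ Finset.range m, S j := Finset.sum_nonneg fun j _ => hSnn j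
    simp only [hCdef]; linarith
  refine ⟨C, C, C, C, hCpos, hCpos, hCpos, hCpos, ?_⟩
  intro ε₁ ε₂ hε₁ hε₂ u₁ u₂ hu₁ hu₂
  set p : X × X := (u₁, u₂) with hpdef
  refine ⟨v.1, v.2, ?_, ?_, ?_, ?_⟩
  · have := congrArg Prod.fst hfv
    simpa [hfdef] using this.symm
  · have := congrArg Prod.snd hfv
    simpa [hfdef] using this.symm
  all_goals {
    -- common estimate : dist p v ≤ (C - 1) * (ε₁ + ε₂)
    have hstep : ∀ j : ℕ, dist (f^[j] p) (f^[j+1] p) ≤ S j * (ε₁ + ε₂) := by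
      intro j
      rw [Function.iterate_succ_apply]
      obtain ⟨h1, h2⟩ := key j p (f p)
      have e1 : ‖p.1 - (f p).1‖ ≤ ε₁ := by simpa [hfdef, hpdef] using hu₁
      have e2 : ‖p.2 - (f p).2‖ ≤ ε₂ := by simpa [hfdef, hpdef] using hu₂
      rw [Prod.dist_eq]
      apply max_le
      · rw [dist_eq_norm]
        have := hent j
        simp only [hSdef]
        nlinarith [hent j 0 0, hent j 0 1, hent j 1 0, hent j 1 1,
          norm_nonneg (p.1 - (f p).1), norm_nonneg (p.2 - (f p).2)]
      · rw [dist_eq_norm]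
        simp only [hSdef]
        nlinarith [hent j 0 0, hent j 0 1, hent j 1 0, hent j 1 1,
          norm_nonneg (p.1 - (f p).1), norm_nonneg (p.2 - (f p).2)]
    have hiter : dist p (f^[m] p) ≤ (∑ j ∈ Finset.range m, S j) * (ε₁ + ε₂) := by
      have h := dist_le_range_sum_dist (fun j => f^[j] p) m
      simp only [Function.iterate_zero_apply] at h
      calc dist p (f^[m] p) ≤ ∑ j ∈ Finset.range m, dist (f^[j] p) (f^[j+1] p) := h
        _ ≤ ∑ j ∈ Finset.range m, S j * (ε₁ + ε₂) :=
            Finset.sum_le_sum fun j _ => hstep j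
        _ = (∑ j ∈ Finset.range m, S j) * (ε₁ + ε₂) := by rw [Finset.sum_mul]
    have hdv : dist p v ≤ 2 * dist p (f^[m] p) := by
      have h := hg.dist_fixedPoint_le p
      rw [← hvdef] at h
      have hk : (1 : ℝ) - ((1/2 : NNReal) : ℝ) = 1/2 := by norm_num
      rw [hk] at h
      linarith
    have hfinal : dist p v ≤ (C - 1) * (ε₁ + ε₂) := by
      simp only [hCdef]
      calc dist p v ≤ 2 * dist p (f^[m] p) := hdv
        _ ≤ 2 * ((∑ j ∈ Finset.range m, S j) * (ε₁ + ε₂)) := by linarith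
        _ = (2 * (∑ j ∈ Finset.range m, S j) + 1 - 1) * (ε₁ + ε₂) := by ring
    first
    | ( -- first component
        have hle : dist p.1 v.1 ≤ dist p v := by rw [Prod.dist_eq]; exact le_max_left _ _
        have := hle.trans hfinal
        rw [dist_eq_norm] at this
        simp only [hpdef] at this
        nlinarith )
    | ( have hle : dist p.2 v.2 ≤ dist p v := by rw [Prod.dist_eq]; exact le_max_right _ _
        have := hle.trans hfinal
        rw [dist_eq_norm] at this
        simp only [hpdef] at this
        nlinarith )
  }
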